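/- Soundness of subterm domain blocking: for every clause set M, if M is E-satisfiable then blsd(M) is E-satisfiable. -/

import Mathlib

namespace BUMG

/-- First-order terms over function symbols `F`, with variables indexed by `ℕ`. -/
inductive Term (F : Type) : Type where
  | var : ℕ → Term F
  | app : F → List (Term F) → Term F

namespace Term
variable {F : Type}

/-- The list of variables occurring in a term. -/
def vars : Term F → List ℕ
  | var n => [n]
  | app _ ts => ts.attach.flatMap (fun t => vars t.1)
decreasing_by simp_wf; have := List.sizeOf_lt_of_mem t.2; omega

/-- The function symbols (with the arity of the occurrence) occurring in a term. -/
def funcs : Term F → List (F × ℕ)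
  | var _ => []
  | app f ts => (f, ts.length) :: ts.attach.flatMap (fun t => funcs t.1)
decreasing_by simp_wf; have := List.sizeOf_lt_of_mem t.2; omega

/-- Applying a substitution to a term. -/
def subst (g : ℕ → Term F) : Term F → Term F
  | var n => g n
  | app f ts => app f (ts.attach.map (fun t => subst g t.1))
decreasing_by simp_wf; have := List.sizeOf_lt_of_mem t.2; omega

/-- The number of occurrences of symbols (variables and function symbols) in a term. -/
def size : Term F → ℕ
  | var _ => 1
  | app _ ts => 1 + (ts.attach.map (fun t => size t.1)).sum
decreasing_by simp_wf; have := List.sizeOf_lt_of_mem t.2; omega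

/-- A term is ground iff it contains no variables. -/
def IsGround (t : Term F) : Prop := t.vars = []

def isVar : Term F → Bool
  | var _ => true
  | app _ _ => false

/-- A proper functional term is a term that is neither a variable nor a constant. -/
def isPF : Term F → Bool
  | app _ (_ :: _) => true
  | _ => false

/-- The subterm relation. -/
inductive Subterm : Term F → Term F → Prop
  | refl (t : Term F) : Subterm t t
  | app {s t : Term F} {f : F} {ts : List (Term F)} :
      t ∈ ts → Subterm s t → Subterm s (app f ts)

end Term

/-- Atoms over predicate symbols `P` and function symbols `F`. -/
structure Atom (P F : Type) where
  pred : P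
  args : List (Term F)

namespace Atom
variable {P F : Type}

def subst (g : ℕ → Term F) (a : Atom P F) : Atom P F := ⟨a.pred, a.args.map (Term.subst g)⟩
def vars (a : Atom P F) : List ℕ := a.args.flatMap Term.vars
def IsGround (a : Atom P F) : Prop := a.vars = []
def funcs (a : Atom P F) : List (F × ℕ) := a.args.flatMap Term.funcs
/-- Whether the atom contains a proper functional term. -/
def hasPF (a : Atom P F) : Bool := a.args.any Term.isPF
def size (a : Atom P F) : ℕ := 1 + (a.args.map Term.size).sum

end Atom

/-- A clause `H₁ ∨ ... ∨ Hₘ ← B₁ ∧ ... ∧ Bₖ` with head atoms `heads`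
and body atoms `body`. -/
structure Clause (P F : Type) where
  heads : List (Atom P F)
  body : List (Atom P F)

namespace Clause
variable {P F : Type}

def atoms (C : Clause P F) : List (Atom P F) := C.heads ++ C.body
def vars (C : Clause P F) : List ℕ := C.atoms.flatMap Atom.vars
def bodyVars (C : Clause P F) : List ℕ := C.body.flatMap Atom.vars
def headVars (C : Clause P F) : List ℕ := C.heads.flatMap Atom.vars
def maxVar (C : Clause P F) : ℕ := C.vars.foldr max 0
def subst (g : ℕ → Term F) (C : Clause P F) : Clause P F :=
  ⟨C.heads.map (Atom.subst g), C.body.map (Atom.subst g)⟩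
/-- The predicate symbols (with the arity of the occurrence) occurring in a clause. -/
def preds (C : Clause P F) : List (P × ℕ) := C.atoms.map (fun a => (a.pred, a.args.length))
/-- The function symbols (with the arity of the occurrence) occurring in a clause. -/
def funcs (C : Clause P F) : List (F × ℕ) := C.atoms.flatMap Atom.funcs
/-- The number of occurrences of symbols in a clause. -/
def size (C : Clause P F) : ℕ := (C.atoms.map Atom.size).sum

/-- A clause is range-restricted iff every variable occurring in it occurs in its body. -/
def RangeRestricted (C : Clause P F) : Prop := ∀ v ∈ C.vars, v ∈ C.bodyVars

/-- A Bernays–Schönfinkel clause: every functional term occurring in it is a constant. -/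
def BS (C : Clause P F) : Prop := ∀ fn ∈ C.funcs, fn.2 = 0

end Clause

/-- A clause set is range-restricted iff all its clauses are. -/
def RangeRestrictedSet {P F : Type} (M : Set (Clause P F)) : Prop :=
  ∀ C ∈ M, C.RangeRestricted

/-- The predicate symbols (with arities) occurring in a clause set. -/
def predsOf {P F : Type} (M : Set (Clause P F)) : Set (P × ℕ) :=
  { pn | ∃ C ∈ M, pn ∈ C.preds }

/-- The function symbols (with arities) occurring in a clause set. -/
def funcsOf {P F : Type} (M : Set (Clause P F)) : Set (F × ℕ) :=
  { fn | ∃ C ∈ M, fn ∈ C.funcs }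

/-- A signature: a set of predicate symbols with arities and
a set of function symbols with arities. -/
structure Sig (P F : Type) where
  preds : Set (P × ℕ)
  funcs : Set (F × ℕ)

/-- The clause set `M` is well-formed over the signature `σ`: all symbols occurring in `M`
belong to `σ` (with matching arities). -/
def WFSet {P F : Type} (σ : Sig P F) (M : Set (Clause P F)) : Prop :=
  ∀ C ∈ M, (∀ pn ∈ C.preds, pn ∈ σ.preds) ∧ (∀ fn ∈ C.funcs, fn ∈ σ.funcs)

/-- The total number of occurrences of symbols in a clause set. -/
noncomputable def setSize {P F : Type} (M : Set (Clause P F)) : ℕ :=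
  ∑ᶠ C ∈ M, C.size

/-! ### Herbrand semantics -/

/-- A substitution is ground iff it maps every variable to a ground term. -/
def GroundSubst {F : Type} (g : ℕ → Term F) : Prop := ∀ n, (g n).IsGround

/-- A (Herbrand) interpretation `I` (a set of ground atoms) satisfies a clause iff
it satisfies every ground instance of it. -/
def satClause {P F : Type} (I : Set (Atom P F)) (C : Clause P F) : Prop :=
  ∀ g : ℕ → Term F, GroundSubst g →
    (∀ a ∈ C.body, a.subst g ∈ I) → ∃ a ∈ C.heads, a.subst g ∈ I

/-- A clause set is satisfiable iff some Herbrand interpretation (a set of ground atoms)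
satisfies every ground instance of every clause of it. -/
def Satisfiable {P F : Type} (M : Set (Clause P F)) : Prop :=
  ∃ I : Set (Atom P F), (∀ a ∈ I, a.IsGround) ∧ ∀ C ∈ M, satClause I C

/-! ### Equality axioms and E-satisfiability -/

/-- The equality atom `s ≈ t` (`eqP` being the distinguished equality predicate `≈`). -/
def eqAtom {P F : Type} (eqP : P) (s t : Term F) : Atom P F := ⟨eqP, [s, t]⟩

def rangeVars {F : Type} (n : ℕ) : List (Term F) := (List.range n).map Term.var

def xsList {F : Type} (n : ℕ) : List (Term F) := (List.range n).map (fun i => Term.var (2*i))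
def ysList {F : Type} (n : ℕ) : List (Term F) := (List.range n).map (fun i => Term.var (2*i+1))
def eqConjList {P F : Type} (eqP : P) (n : ℕ) : List (Atom P F) :=
  (List.range n).map (fun i => eqAtom eqP (Term.var (2*i)) (Term.var (2*i+1)))

/-- The equality axioms `EAX`: `≈` is reflexive, symmetric, transitive and compatible with
the given function and predicate symbols. -/
def EAX {P F : Type} (eqP : P) (Ps : Set (P × ℕ)) (Fs : Set (F × ℕ)) : Set (Clause P F) :=
  { ⟨[eqAtom eqP (Term.var 0) (Term.var 0)], []⟩,
    ⟨[eqAtom eqP (Term.var 1) (Term.var 0)], [eqAtom eqP (Term.var 0) (Term.var 1)]⟩,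
    ⟨[eqAtom eqP (Term.var 0) (Term.var 2)],
      [eqAtom eqP (Term.var 0) (Term.var 1), eqAtom eqP (Term.var 1) (Term.var 2)]⟩ } ∪
  { D | ∃ fn ∈ Fs,
      D = ⟨[eqAtom eqP (Term.app fn.1 (xsList fn.2)) (Term.app fn.1 (ysList fn.2))],
           eqConjList eqP fn.2⟩ } ∪
  { D | ∃ pn ∈ Ps,
      D = ⟨[⟨pn.1, ysList pn.2⟩], ⟨pn.1, xsList pn.2⟩ :: eqConjList eqP pn.2⟩ }

/-- A clause set `M` is E-satisfiable iff `M` together with the equality axioms for the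
symbols occurring in `M` is satisfiable. -/
def ESatisfiable {P F : Type} (eqP : P) (M : Set (Clause P F)) : Prop :=
  Satisfiable (M ∪ EAX eqP (predsOf M) (funcsOf M))

/-! ### Range-restricting transformations -/

/-- The atom `dom(t)`. -/
def domAtom {P F : Type} (domP : P) (t : Term F) : Atom P F := ⟨domP, [t]⟩

/-- The term `c` for a constant `c`. -/
def cTerm {F : Type} (c : F) : Term F := Term.app c []

/-- The clause `dom(c) ← ⊤`. -/
def domcClause {P F : Type} (domP : P) (c : F) : Clause P F :=
  ⟨[domAtom domP (cTerm c)], []⟩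

/-- Range-restricting a clause (Step (2) of `crr`, Step (3) of `rr`):
`H ← B` becomes `H ← B ∧ dom(x₁) ∧ ... ∧ dom(xₖ)` where `x₁,...,xₖ` are the variables
occurring in the head but not in the body. -/
def rangeRestrictClause {P F : Type} (domP : P) (C : Clause P F) : Clause P F :=
  ⟨C.heads, C.body ++
    ((C.headVars.filter (fun v => v ∉ C.bodyVars)).dedup).map
      (fun v => domAtom domP (Term.var v))⟩

/-- The argument list of the term abstraction of an atom: argument positions holding
non-variable terms are replaced by fresh variables. -/
def abstrArgs {F : Type} (base : ℕ) (ts : List (Term F)) : List (Term F) :=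
  ts.mapIdx (fun i t => if t.isVar then t else Term.var (base + i))

/-- Step (2) of the `rr` transformation: for each clause `H ← B` of `M`, each body atom
`P(t₁,...,tₙ)` of `B` with term abstraction `P(s₁,...,sₙ)` and abstraction substitution `α`,
the clauses `dom(xᵢ)α ← P(s₁,...,sₙ)` for every `xᵢ` in the domain of `α`. -/
def step2Set {P F : Type} (domP : P) (M : Set (Clause P F)) : Set (Clause P F) :=
  { D | ∃ C ∈ M, ∃ a ∈ C.body, ∃ i : Fin a.args.length,
        (a.args.get i).isVar = false ∧
        D = ⟨[domAtom domP (a.args.get i)],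
             [⟨a.pred, abstrArgs (C.maxVar + 1) a.args⟩]⟩ }

/-- Step (4) of the `rr` transformation: the clauses `dom(xᵢ) ← P(x₁,...,xₙ)` for every
`n`-ary predicate symbol `P` of the signature and every `1 ≤ i ≤ n`. -/
def step4Set {P F : Type} (domP : P) (Ps : Set (P × ℕ)) : Set (Clause P F) :=
  { D | ∃ pn ∈ Ps, ∃ i, i < pn.2 ∧
        D = ⟨[domAtom domP (Term.var i)], [⟨pn.1, rangeVars pn.2⟩]⟩ }

/-- Step (5) of the `rr` transformation: the clauses `dom(xᵢ) ← dom(f(x₁,...,xₙ))` for every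
`n`-ary function symbol `f` of the signature and every `1 ≤ i ≤ n`. -/
def step5Set {P F : Type} (domP : P) (Fs : Set (F × ℕ)) : Set (Clause P F) :=
  { D | ∃ fn ∈ Fs, ∃ i, i < fn.2 ∧
        D = ⟨[domAtom domP (Term.var i)],
             [domAtom domP (Term.app fn.1 (rangeVars fn.2))]⟩ }

/-- The new range-restricting transformation `rr` (over the signature `σ`, with fresh unary
predicate symbol `dom` and constant `c`): the clauses of `M`, the clause `dom(c) ← ⊤` and
the Step-(2) clauses, all range-restricted by Step (3), together with the Step-(4) and
Step-(5) clauses. -/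
def rr {P F : Type} [DecidableEq P] [DecidableEq F] (σ : Sig P F) (domP : P) (c : F)
    (M : Set (Clause P F)) : Set (Clause P F) :=
  (rangeRestrictClause domP '' (M ∪ {domcClause domP c} ∪ step2Set domP M))
  ∪ step4Set domP σ.preds ∪ step5Set domP σ.funcs

/-- Step (3) of the classical transformation `crr`: the clauses
`dom(f(x₁,...,xₙ)) ← dom(x₁) ∧ ... ∧ dom(xₙ)` enumerating the Herbrand universe. -/
def crrStep3 {P F : Type} (domP : P) (Fs : Set (F × ℕ)) : Set (Clause P F) :=
  { D | ∃ fn ∈ Fs,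
        D = ⟨[domAtom domP (Term.app fn.1 (rangeVars fn.2))],
             (List.range fn.2).map (fun i => domAtom domP (Term.var i))⟩ }

/-- The classical range-restricting transformation `crr`. -/
def crr {P F : Type} [DecidableEq P] [DecidableEq F] (σ : Sig P F) (domP : P) (c : F)
    (M : Set (Clause P F)) : Set (Clause P F) :=
  (rangeRestrictClause domP '' (M ∪ {domcClause domP c})) ∪ crrStep3 domP σ.funcs

/-! ### Shifting -/

/-- Partial flattening of the arguments of a non-equational body atom: top-level proper
functional terms are replaced by fresh variables. The `j`-th body atom uses the fresh
variables `base + Nat.pair j i`. -/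
def pfArgs {P F : Type} [DecidableEq P] (eqP : P) (base j : ℕ) (a : Atom P F) : Atom P F :=
  if a.pred = eqP then a
  else ⟨a.pred, a.args.mapIdx (fun i t => if t.isPF then Term.var (base + Nat.pair j i) else t)⟩

/-- The equations `tᵢ ≈ xᵢ` introduced by partially flattening a body atom. -/
def pfEqs {P F : Type} [DecidableEq P] (eqP : P) (base j : ℕ) (a : Atom P F) :
    List (Atom P F) :=
  if a.pred = eqP then []
  else (a.args.mapIdx (fun i t => (i, t))).filterMap
        (fun p => if p.2.isPF then
            some (eqAtom eqP p.2 (Term.var (base + Nat.pair j p.1))) else none)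

/-- Partial flattening of a clause. -/
def pfClause {P F : Type} [DecidableEq P] (eqP : P) (C : Clause P F) : Clause P F :=
  ⟨C.heads,
   C.body.mapIdx (fun j a => pfArgs eqP (C.maxVar + 1) j a) ++
   (C.body.mapIdx (fun j a => pfEqs eqP (C.maxVar + 1) j a)).flatten⟩

/-- The reflexivity unit clause `x ≈ x ← ⊤`. -/
def reflClause {P F : Type} (eqP : P) : Clause P F :=
  ⟨[eqAtom eqP (Term.var 0) (Term.var 0)], []⟩

/-- The partial flattening transformation `pf`. -/
def pf {P F : Type} [DecidableEq P] (eqP : P) (M : Set (Clause P F)) : Set (Clause P F) :=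
  pfClause eqP '' M ∪ {reflClause eqP}

/-- The atom `P̄(t₁,...,tₙ)` for the atom `P(t₁,...,tₙ)`, where `bar` maps each predicate
symbol `P` to the fresh predicate symbol `P̄` uniquely associated with it. -/
def barAtom {P F : Type} (bar : P → P) (a : Atom P F) : Atom P F := ⟨bar a.pred, a.args⟩

/-- Basic shifting of a clause: the body atoms containing a proper functional term are
moved, negated (via `bar`), into the head. -/
def bsClause {P F : Type} (bar : P → P) (C : Clause P F) : Clause P F :=
  ⟨C.heads ++ (C.body.filter (fun a => a.hasPF)).map (barAtom bar),
   C.body.filter (fun a => !a.hasPF)⟩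

/-- The predicate symbols (with arities) of shifted atoms of `M`. -/
def shiftedPreds {P F : Type} (M : Set (Clause P F)) : Set (P × ℕ) :=
  { pn | ∃ C ∈ M, ∃ a ∈ C.body, a.hasPF = true ∧ pn = (a.pred, a.args.length) }

/-- The basic shifting transformation `bs`: shift deep body atoms and add the shifted atom
consistency clauses `⊥ ← P(x₁,...,xₙ) ∧ P̄(x₁,...,xₙ)`. -/
def bs {P F : Type} (bar : P → P) (M : Set (Clause P F)) : Set (Clause P F) :=
  bsClause bar '' M ∪
  { D | ∃ pn ∈ shiftedPreds M,
        D = ⟨[], [⟨pn.1, rangeVars pn.2⟩, ⟨bar pn.1, rangeVars pn.2⟩]⟩ }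

/-- The shifting transformation: `sh(M) = bs(pf(M))`. -/
def sh {P F : Type} [DecidableEq P] (eqP : P) (bar : P → P) (M : Set (Clause P F)) :
    Set (Clause P F) :=
  bs bar (pf eqP M)

/-! ### Blocking -/

/-- The head `x ≈ y ∨ x ≉ y` of the blocking clauses. -/
def blockSplitHead {P F : Type} (eqP neqP : P) : List (Atom P F) :=
  [eqAtom eqP (Term.var 0) (Term.var 1), eqAtom neqP (Term.var 0) (Term.var 1)]

/-- The clause `⊥ ← x ≈ y ∧ x ≉ y`. -/
def eqNeqBot {P F : Type} (eqP neqP : P) : Clause P F :=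
  ⟨[], [eqAtom eqP (Term.var 0) (Term.var 1), eqAtom neqP (Term.var 0) (Term.var 1)]⟩

/-- The unrestricted domain blocking transformation `blud`. -/
def blud {P F : Type} (domP eqP neqP : P) (M : Set (Clause P F)) : Set (Clause P F) :=
  M ∪ { ⟨blockSplitHead eqP neqP, [domAtom domP (Term.var 0), domAtom domP (Term.var 1)]⟩,
        eqNeqBot eqP neqP }

/-- The atom `sub(s,t)`. -/
def subAtom {P F : Type} (subP : P) (s t : Term F) : Atom P F := ⟨subP, [s, t]⟩

/-- The axioms describing the subterm relationship: `sub(x,x) ← dom(x)` and, for every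
`n`-ary function symbol `f` of the signature and `1 ≤ i ≤ n`,
`sub(x, f(x₁,...,xₙ)) ← sub(x,xᵢ) ∧ dom(x) ∧ dom(f(x₁,...,xₙ))`. -/
def subClauses {P F : Type} (domP subP : P) (Fs : Set (F × ℕ)) : Set (Clause P F) :=
  { ⟨[subAtom subP (Term.var 0) (Term.var 0)], [domAtom domP (Term.var 0)]⟩ } ∪
  { D | ∃ fn ∈ Fs, ∃ i, i < fn.2 ∧
        D = ⟨[subAtom subP (Term.var fn.2) (Term.app fn.1 (rangeVars fn.2))],
             [subAtom subP (Term.var fn.2) (Term.var i),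
              domAtom domP (Term.var fn.2),
              domAtom domP (Term.app fn.1 (rangeVars fn.2))]⟩ }

/-- The subterm domain blocking transformation `blsd`. -/
def blsd {P F : Type} (σ : Sig P F) (domP eqP neqP subP : P) (M : Set (Clause P F)) :
    Set (Clause P F) :=
  M ∪ subClauses domP subP σ.funcs ∪
  { ⟨blockSplitHead eqP neqP, [subAtom subP (Term.var 0) (Term.var 1)]⟩,
    eqNeqBot eqP neqP }

/-- The subterm predicate blocking transformation `blsp`. -/
def blsp {P F : Type} (σ : Sig P F) (domP eqP neqP subP : P) (M : Set (Clause P F)) :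
    Set (Clause P F) :=
  M ∪ subClauses domP subP σ.funcs ∪
  { D | ∃ p : P, (p, 1) ∈ σ.preds ∧
        D = ⟨blockSplitHead eqP neqP,
             [subAtom subP (Term.var 0) (Term.var 1),
              ⟨p, [Term.var 0]⟩, ⟨p, [Term.var 1]⟩]⟩ } ∪
  { eqNeqBot eqP neqP }

/-- The unrestricted predicate blocking transformation `blup`. -/
def blup {P F : Type} (σ : Sig P F) (domP eqP neqP : P) (M : Set (Clause P F)) :
    Set (Clause P F) :=
  M ∪ { D | ∃ p : P, (p, 1) ∈ σ.preds ∧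
        D = ⟨blockSplitHead eqP neqP, [⟨p, [Term.var 0]⟩, ⟨p, [Term.var 1]⟩]⟩ } ∪
  { eqNeqBot eqP neqP }

/-! ### Combined transformations -/

/-- The base transformations `rr`, `sh∘rr`, `crr`, `sh∘crr`
(composition read left-to-right, so `(sh∘rr)(M) = rr(sh(M))`). -/
inductive BaseTr | rr | shrr | crr | shcrr

/-- The optional blocking transformations. -/
inductive BlockTr | id | blsd | blsp | blud | blup

def applyBase {P F : Type} [DecidableEq P] [DecidableEq F] (σ : Sig P F) (domP : P) (c : F)
    (eqP : P) (bar : P → P) : BaseTr → Set (Clause P F) → Set (Clause P F)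
  | .rr, M => rr σ domP c M
  | .shrr, M => rr σ domP c (sh eqP bar M)
  | .crr, M => crr σ domP c M
  | .shcrr, M => crr σ domP c (sh eqP bar M)

def applyBlock {P F : Type} (σ : Sig P F) (domP eqP neqP subP : P) :
    BlockTr → Set (Clause P F) → Set (Clause P F)
  | .id, M => M
  | .blsd, M => blsd σ domP eqP neqP subP M
  | .blsp, M => blsp σ domP eqP neqP subP M
  | .blud, M => blud domP eqP neqP M
  | .blup, M => blup σ domP eqP neqP M

/-- A combined transformation: a base transformation optionally followed by a blocking
transformation (composition read left-to-right). -/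
def applyTr {P F : Type} [DecidableEq P] [DecidableEq F] (σ : Sig P F) (domP : P) (c : F)
    (eqP neqP subP : P) (bar : P → P) (b : BaseTr) (τ : BlockTr) (M : Set (Clause P F)) :
    Set (Clause P F) :=
  applyBlock σ domP eqP neqP subP τ (applyBase σ domP c eqP bar b M)

/-- The clause `x ≈ x ← dom(x)`. -/
def reflDomClause {P F : Type} (domP eqP : P) : Clause P F :=
  ⟨[eqAtom eqP (Term.var 0) (Term.var 0)], [domAtom domP (Term.var 0)]⟩

end BUMG
namespace BUMG
variable {P F : Type}

theorem term_ind {motive : Term F → Prop} (hv : ∀ n, motive (.var n))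
    (ha : ∀ f ts, (∀ t ∈ ts, motive t) → motive (.app f ts)) : ∀ t, motive t
  | .var n => hv n
  | .app f ts => ha f ts (fun t ht => term_ind hv ha t)
decreasing_by simp_wf; have := List.sizeOf_lt_of_mem ht; omega

@[simp] theorem subst_var (g : ℕ → Term F) (n : ℕ) : Term.subst g (.var n) = g n := by
  simp [Term.subst]

@[simp] theorem subst_app (g : ℕ → Term F) (f : F) (ts : List (Term F)) :
    Term.subst g (.app f ts) = .app f (ts.map (Term.subst g)) := by
  rw [Term.subst]
  simp [List.attach_map_val]

@[simp] theorem vars_var (n : ℕ) : (Term.var (F := F) n).vars = [n] := by simp [Term.vars]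

@[simp] theorem vars_app (f : F) (ts : List (Term F)) :
    (Term.app f ts).vars = ts.flatMap Term.vars := by
  rw [Term.vars]; simp [List.attach, List.flatMap_map]

@[simp] theorem funcs_var (n : ℕ) : (Term.var (F := F) n).funcs = [] := by simp [Term.funcs]

@[simp] theorem funcs_app (f : F) (ts : List (Term F)) :
    (Term.app f ts).funcs = (f, ts.length) :: ts.flatMap Term.funcs := by
  rw [Term.funcs]; simp [List.attach, List.flatMap_map]

end BUMG
namespace BUMG
variable {P F : Type}

theorem isGround_subst {g : ℕ → Term F} (hg : GroundSubst g) (t : Term F) :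
    (t.subst g).IsGround := by
  induction t using term_ind with
  | hv n => simpa using hg n
  | ha f ts ih =>
      simp only [subst_app, Term.IsGround, vars_app, List.flatMap_eq_nil_iff]
      intro l hl
      simp only [List.mem_map] at hl
      obtain ⟨t, ht, rfl⟩ := hl
      exact ih t ht

theorem atom_isGround_subst {g : ℕ → Term F} (hg : GroundSubst g) (a : Atom P F) :
    (a.subst g).IsGround := by
  simp only [Atom.subst, Atom.IsGround, Atom.vars, List.flatMap_eq_nil_iff, List.mem_map]
  rintro l ⟨t, -, rfl⟩
  exact isGround_subst hg t

theorem ground_nonempty : ∀ t : Term F, t.IsGround → Nonempty F := by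
  intro t
  induction t using term_ind with
  | hv n => intro h; simp [Term.IsGround] at h
  | ha f ts ih => intro _; exact ⟨f⟩

open Classical in
noncomputable def collapse (S : Set (F × ℕ)) (d : Term F) : Term F → Term F
  | .var n => .var n
  | .app f ts => if (f, ts.length) ∈ S then .app f (ts.attach.map fun t => collapse S d t.1) else d
decreasing_by simp_wf; have := List.sizeOf_lt_of_mem t.2; omega

@[simp] theorem collapse_var (S : Set (F × ℕ)) (d : Term F) (n : ℕ) :
    collapse S d (.var n) = .var n := by rw [collapse]

theorem collapse_app_mem {S : Set (F × ℕ)} {d : Term F} {f : F} {ts : List (Term F)}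
    (h : (f, ts.length) ∈ S) :
    collapse S d (.app f ts) = .app f (ts.map (collapse S d)) := by
  rw [collapse, if_pos h]
  simp [List.attach_map_val]

theorem collapse_app_not {S : Set (F × ℕ)} {d : Term F} {f : F} {ts : List (Term F)}
    (h : (f, ts.length) ∉ S) :
    collapse S d (.app f ts) = d := by
  rw [collapse, if_neg h]

theorem collapse_ground {S : Set (F × ℕ)} {d : Term F} (hd : d.IsGround) :
    ∀ t : Term F, t.IsGround → (collapse S d t).IsGround := by
  intro t
  induction t using term_ind with
  | hv n => intro h; simp [Term.IsGround] at h
  | ha f ts ih =>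
      intro h
      simp only [Term.IsGround, vars_app, List.flatMap_eq_nil_iff] at h
      by_cases hm : (f, ts.length) ∈ S
      · rw [collapse_app_mem hm]
        simp only [Term.IsGround, vars_app, List.flatMap_eq_nil_iff]
        rintro l hl
        simp only [List.mem_map] at hl
        obtain ⟨t, ht, rfl⟩ := hl
        exact ih t ht (h t ht)
      · rw [collapse_app_not hm]; exact hd

theorem collapse_subst {S : Set (F × ℕ)} {d : Term F} {g : ℕ → Term F} :
    ∀ t : Term F, (∀ fn ∈ t.funcs, fn ∈ S) →
      collapse S d (t.subst g) = t.subst (fun n => collapse S d (g n)) := by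
  intro t
  induction t using term_ind with
  | hv n => intro _; simp
  | ha f ts ih =>
      intro hS
      simp only [funcs_app, List.mem_cons] at hS
      rw [subst_app, collapse_app_mem (by simpa using hS (f, ts.length) (Or.inl rfl)),
        subst_app]
      simp only [List.map_map]
      congr 1
      apply List.map_congr_left
      intro t ht
      exact ih t ht (fun fn hfn => hS fn (Or.inr (List.mem_flatMap.2 ⟨t, ht, hfn⟩)))

theorem groundSubst_collapse {S : Set (F × ℕ)} {d : Term F} (hd : d.IsGround)
    {g : ℕ → Term F} (hg : GroundSubst g) :
    GroundSubst (fun n => collapse S d (g n)) :=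
  fun n => collapse_ground hd _ (hg n)

end BUMG
namespace BUMG

/-- **Soundness of subterm domain blocking**: for every clause set `M`, if `M` is
E-satisfiable then `blsd(M)` is E-satisfiable. `M` contains the unary predicate `dom`,
`sub` is a fresh binary predicate symbol not in `Σ_P` and not occurring in `M`, and `≉`
(`neqP`) is a fresh binary predicate symbol uniquely associated with `≈` and not occurring
in `M`. -/
theorem blsd_soundness {P F : Type} [DecidableEq P] [DecidableEq F]
    (σ : Sig P F) (domP eqP neqP subP : P) (M : Set (Clause P F))
    (hfin : M.Finite) (hwf : WFSet σ M)
    (hdomM : (domP, 1) ∈ predsOf M)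
    (heq : (eqP, 2) ∈ σ.preds)
    (hsubFresh : ∀ n, (subP, n) ∉ σ.preds)
    (hneqFresh : ∀ n, (neqP, n) ∉ σ.preds)
    (hsubNeq : subP ≠ neqP)
    (hsat : ESatisfiable eqP M) :
    ESatisfiable eqP (blsd σ domP eqP neqP subP M) := by
  classical
  by_cases hF : Nonempty F
  swap
  · refine ⟨∅, by simp, ?_⟩
    intro C hC g hg hb
    exact absurd (ground_nonempty _ (hg 0)) hF
  obtain ⟨c0⟩ := hF
  obtain ⟨I, hIg, hI⟩ := hsat
  set d : Term F := Term.app c0 [] with hd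
  have hdg : d.IsGround := by simp [hd, Term.IsGround]
  set S : Set (F × ℕ) := funcsOf M with hS
  set φ : Term F → Term F := collapse S d with hφ
  have hφg : ∀ {g : ℕ → Term F}, GroundSubst g → GroundSubst (fun n => φ (g n)) :=
    fun hg => groundSubst_collapse hdg hg
  set φA : Atom P F → Atom P F := fun a => ⟨a.pred, a.args.map φ⟩ with hφA
  -- freshness consequences
  have eqP_ne_sub : eqP ≠ subP := fun h => hsubFresh 2 (h ▸ heq)
  have eqP_ne_neq : eqP ≠ neqP := fun h => hneqFresh 2 (h ▸ heq)
  -- atoms of clauses of M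
  have hMatom : ∀ C ∈ M, ∀ a ∈ C.atoms,
      a.pred ≠ subP ∧ a.pred ≠ neqP ∧ ∀ fn ∈ a.funcs, fn ∈ S := by
    intro C hC a ha
    have hp : (a.pred, a.args.length) ∈ C.preds := List.mem_map_of_mem (f := fun a : Atom P F => (a.pred, a.args.length)) ha
    have hps := (hwf C hC).1 _ hp
    refine ⟨fun h => hsubFresh _ (h ▸ hps), fun h => hneqFresh _ (h ▸ hps), ?_⟩
    intro fn hfn
    exact ⟨C, hC, List.mem_flatMap.2 ⟨a, ha, hfn⟩⟩
  -- substitution transfer for atoms over the signature of M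
  have hAtrans : ∀ (g : ℕ → Term F) (a : Atom P F), (∀ fn ∈ a.funcs, fn ∈ S) →
      φA (a.subst g) = a.subst (fun n => φ (g n)) := by
    intro g a hSa
    simp only [hφA, Atom.subst, List.map_map]
    refine congrArg _ ?_
    apply List.map_congr_left
    intro t ht
    exact collapse_subst t (fun fn hfn => hSa fn (List.mem_flatMap.2 ⟨t, ht, hfn⟩))
  -- basic equality facts in I
  have hreflC : (⟨[eqAtom eqP (.var 0) (.var 0)], []⟩ : Clause P F)
      ∈ M ∪ EAX eqP (predsOf M) (funcsOf M) := Or.inr (by simp [EAX])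
  have hsymC : (⟨[eqAtom eqP (.var 1) (.var 0)], [eqAtom eqP (.var 0) (.var 1)]⟩ : Clause P F)
      ∈ M ∪ EAX eqP (predsOf M) (funcsOf M) := Or.inr (by simp [EAX])
  have htransC : (⟨[eqAtom eqP (.var 0) (.var 2)],
      [eqAtom eqP (.var 0) (.var 1), eqAtom eqP (.var 1) (.var 2)]⟩ : Clause P F)
      ∈ M ∪ EAX eqP (predsOf M) (funcsOf M) := Or.inr (by simp [EAX])
  have Irefl : ∀ s : Term F, s.IsGround → eqAtom eqP s s ∈ I := by
    intro s hs
    have := hI _ hreflC (fun _ => s) (fun _ => hs) (by simp)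
    simpa [eqAtom, Atom.subst] using this
  have Isym : ∀ s t : Term F, s.IsGround → t.IsGround →
      eqAtom eqP s t ∈ I → eqAtom eqP t s ∈ I := by
    intro s t hs ht hst
    have := hI _ hsymC (fun n => if n = 0 then s else t)
      (by intro n; dsimp only; split_ifs <;> assumption)
      (by simpa [eqAtom, Atom.subst] using hst)
    simpa [eqAtom, Atom.subst] using this
  have Itrans : ∀ s t u : Term F, s.IsGround → t.IsGround → u.IsGround →
      eqAtom eqP s t ∈ I → eqAtom eqP t u ∈ I → eqAtom eqP s u ∈ I := by
    intro s t u hs ht hu h1 h2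
    have := hI _ htransC (fun n => if n = 0 then s else if n = 1 then t else u)
      (by intro n; dsimp only; split_ifs <;> assumption)
      (by
        intro a ha
        simp only [List.mem_cons, List.not_mem_nil, or_false] at ha
        rcases ha with rfl | rfl <;> simpa [eqAtom, Atom.subst] using (by assumption))
    simpa [eqAtom, Atom.subst] using this
  -- characterization of predicates of blsd(M)
  have hchar : ∀ pn, pn ∈ predsOf (blsd σ domP eqP neqP subP M) →
      pn ∈ predsOf M ∨ pn = (subP, 2) ∨ pn = (neqP, 2) ∨ pn = (eqP, 2) ∨ pn = (domP, 1) := by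
    rintro pn ⟨C, hC, hpn⟩
    rcases hC with (hC | hC) | hC
    · exact Or.inl ⟨C, hC, hpn⟩
    · rcases hC with hC | ⟨fn, hfn, i, hi, rfl⟩
      · rw [Set.mem_singleton_iff] at hC
        subst hC
        simp only [Clause.preds, Clause.atoms, subAtom, domAtom, List.map_append,
          List.map_cons, List.map_nil, List.mem_append, List.mem_cons,
          List.not_mem_nil, or_false, List.mem_singleton] at hpn
        tauto
      · simp only [Clause.preds, Clause.atoms, subAtom, domAtom, List.map_append,
          List.map_cons, List.map_nil, List.mem_append, List.mem_cons,
          List.not_mem_nil, or_false, List.mem_singleton] at hpn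
        tauto
    · simp only [Set.mem_insert_iff, Set.mem_singleton_iff] at hC
      rcases hC with rfl | rfl <;>
        simp only [Clause.preds, Clause.atoms, blockSplitHead, eqNeqBot, eqAtom, subAtom,
          List.map_append, List.map_cons, List.map_nil, List.mem_append, List.mem_cons,
          List.not_mem_nil, or_false, List.mem_singleton] at hpn <;>
        tauto
  -- the new interpretation
  refine ⟨{a : Atom P F | a.IsGround ∧
      ((a.pred ≠ subP ∧ a.pred ≠ neqP ∧ φA a ∈ I) ∨ a.pred = subP ∨
        (a.pred = neqP ∧ ∃ s t, a.args = [s, t] ∧ eqAtom eqP (φ s) (φ t) ∉ I))},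
    fun a ha => ha.1, ?_⟩
  intro C hC g hg
  -- extraction of I onto eq atoms
  have hEq_of : ∀ s t : Term F,
      (⟨eqP, [s, t]⟩ : Atom P F) ∈ {a : Atom P F | a.IsGround ∧
        ((a.pred ≠ subP ∧ a.pred ≠ neqP ∧ φA a ∈ I) ∨ a.pred = subP ∨
          (a.pred = neqP ∧ ∃ s t, a.args = [s, t] ∧ eqAtom eqP (φ s) (φ t) ∉ I))} →
      eqAtom eqP (φ s) (φ t) ∈ I := by
    rintro s t ⟨-, (⟨-, -, h⟩ | h | ⟨h, -⟩)⟩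
    · simpa [hφA, eqAtom] using h
    · exact absurd h eqP_ne_sub
    · exact absurd h eqP_ne_neq
  rcases hC with ((hCM | hCsub) | hCblk) | hCE
  · -- C ∈ M
    intro hb
    have hbody : ∀ a ∈ C.body, a.subst (fun n => φ (g n)) ∈ I := by
      intro a ha
      obtain ⟨h1, h2, h3⟩ := hMatom C hCM a (List.mem_append_right _ ha)
      have hb' := hb a ha
      rw [← hAtrans g a h3]
      rcases hb' with ⟨-, (⟨-, -, h⟩ | h | ⟨h, -⟩)⟩
      · exact h
      · exact absurd h h1
      · exact absurd h h2
    obtain ⟨a, haH, haI⟩ := hI C (Or.inl hCM) _ (hφg hg) hbody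
    obtain ⟨h1, h2, h3⟩ := hMatom C hCM a (List.mem_append_left _ haH)
    exact ⟨a, haH, atom_isGround_subst hg a,
      Or.inl ⟨h1, h2, by rw [hAtrans g a h3]; exact haI⟩⟩
  · -- C ∈ subClauses
    intro hb
    rcases hCsub with hC1 | ⟨fn, hfn, i, hi, rfl⟩
    · rw [Set.mem_singleton_iff] at hC1
      subst hC1
      exact ⟨_, List.mem_singleton.2 rfl,
        atom_isGround_subst hg _, Or.inr (Or.inl rfl)⟩
    · exact ⟨_, List.mem_singleton.2 rfl,
        atom_isGround_subst hg _, Or.inr (Or.inl rfl)⟩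
  · -- blocking clauses
    simp only [Set.mem_insert_iff, Set.mem_singleton_iff] at hCblk
    rcases hCblk with rfl | rfl
    · intro hb
      by_cases he : eqAtom eqP (φ (g 0)) (φ (g 1)) ∈ I
      · refine ⟨eqAtom eqP (.var 0) (.var 1), by simp [blockSplitHead], ?_⟩
        refine ⟨atom_isGround_subst hg _, Or.inl ⟨eqP_ne_sub, eqP_ne_neq, ?_⟩⟩
        simpa [hφA, eqAtom, Atom.subst] using he
      · refine ⟨eqAtom neqP (.var 0) (.var 1), by simp [blockSplitHead], ?_⟩
        refine ⟨atom_isGround_subst hg _, Or.inr (Or.inr ⟨rfl, g 0, g 1, ?_, he⟩)⟩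
        simp [eqAtom, Atom.subst]
    · intro hb
      exfalso
      have h1 := hb (eqAtom eqP (.var 0) (.var 1)) (by simp [eqNeqBot])
      have h2 := hb (eqAtom neqP (.var 0) (.var 1)) (by simp [eqNeqBot])
      have hin : eqAtom eqP (φ (g 0)) (φ (g 1)) ∈ I := by
        apply hEq_of
        simpa [eqAtom, Atom.subst] using h1
      rcases h2 with ⟨-, (⟨-, h, -⟩ | h | ⟨-, s, t, hargs, hne⟩)⟩
      · exact h (by simp [eqAtom, Atom.subst])
      · exact hsubNeq (by simpa [eqAtom, Atom.subst] using h.symm)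
      · simp only [eqAtom, Atom.subst, List.map_cons, List.map_nil, subst_var,
          List.cons.injEq, and_true] at hargs
        obtain ⟨rfl, rfl, -⟩ := hargs
        exact hne hin
  · -- EAX clauses for blsd(M)
    rcases hCE with (hC3 | ⟨fn, hfn, rfl⟩) | ⟨pn, hpn, rfl⟩
    · -- refl, sym, trans
      simp only [Set.mem_insert_iff, Set.mem_singleton_iff] at hC3
      rcases hC3 with rfl | rfl | rfl
      · intro hb
        refine ⟨_, List.mem_singleton.2 rfl, atom_isGround_subst hg _,
          Or.inl ⟨eqP_ne_sub, eqP_ne_neq, ?_⟩⟩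
        simpa [hφA, eqAtom, Atom.subst] using Irefl (φ (g 0)) (collapse_ground hdg _ (hg 0))
      · intro hb
        have h1 : eqAtom eqP (φ (g 0)) (φ (g 1)) ∈ I := by
          apply hEq_of
          have := hb (eqAtom eqP (.var 0) (.var 1)) (by simp)
          simpa [eqAtom, Atom.subst] using this
        refine ⟨_, List.mem_singleton.2 rfl, atom_isGround_subst hg _,
          Or.inl ⟨eqP_ne_sub, eqP_ne_neq, ?_⟩⟩
        have := Isym _ _ (collapse_ground hdg _ (hg 0)) (collapse_ground hdg _ (hg 1)) h1
        simpa [hφA, eqAtom, Atom.subst] using this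
      · intro hb
        have h1 : eqAtom eqP (φ (g 0)) (φ (g 1)) ∈ I := by
          apply hEq_of
          have := hb (eqAtom eqP (.var 0) (.var 1)) (by simp)
          simpa [eqAtom, Atom.subst] using this
        have h2 : eqAtom eqP (φ (g 1)) (φ (g 2)) ∈ I := by
          apply hEq_of
          have := hb (eqAtom eqP (.var 1) (.var 2)) (by simp)
          simpa [eqAtom, Atom.subst] using this
        refine ⟨_, List.mem_singleton.2 rfl, atom_isGround_subst hg _,
          Or.inl ⟨eqP_ne_sub, eqP_ne_neq, ?_⟩⟩
        have := Itrans _ _ _ (collapse_ground hdg _ (hg 0)) (collapse_ground hdg _ (hg 1))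
            (collapse_ground hdg _ (hg 2)) h1 h2
        simpa [hφA, eqAtom, Atom.subst] using this
    · -- function compatibility
      intro hb
      have hbodyI : ∀ i < fn.2, eqAtom eqP (φ (g (2*i))) (φ (g (2*i+1))) ∈ I := by
        intro i hi
        apply hEq_of
        have := hb (eqAtom eqP (.var (2*i)) (.var (2*i+1)))
          (by simp only [eqConjList, List.mem_map, List.mem_range]; exact ⟨i, hi, rfl⟩)
        simpa [eqAtom, Atom.subst] using this
      refine ⟨_, List.mem_singleton.2 rfl, atom_isGround_subst hg _,
        Or.inl ⟨eqP_ne_sub, eqP_ne_neq, ?_⟩⟩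
      have hlen1 : ((xsList (F := F) fn.2).map (Term.subst g)).length = fn.2 := by
        simp [xsList]
      have hlen2 : ((ysList (F := F) fn.2).map (Term.subst g)).length = fn.2 := by
        simp [ysList]
      by_cases hfm : (fn.1, fn.2) ∈ S
      · -- fn occurs in M : use the congruence axiom of I
        have hmem : (⟨[eqAtom eqP (Term.app fn.1 (xsList fn.2)) (Term.app fn.1 (ysList fn.2))],
            eqConjList eqP fn.2⟩ : Clause P F) ∈ M ∪ EAX eqP (predsOf M) (funcsOf M) :=
          Or.inr (Or.inl (Or.inr ⟨(fn.1, fn.2), hfm, rfl⟩))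
        have := hI _ hmem (fun n => φ (g n)) (hφg hg) (by
          intro a ha
          simp only [eqConjList, List.mem_map, List.mem_range] at ha
          obtain ⟨i, hi, rfl⟩ := ha
          simpa [eqAtom, Atom.subst] using hbodyI i hi)
        simp only [List.mem_singleton, exists_eq_left] at this
        simp only [hφA, hφ, eqAtom, Atom.subst, List.map_cons, List.map_nil, subst_app] at this ⊢
        rw [collapse_app_mem (by rw [hlen1]; exact hfm),
          collapse_app_mem (by rw [hlen2]; exact hfm)]
        convert this using 4 <;> simp [xsList, ysList, List.map_map, Function.comp] <;>
          · apply List.map_congr_left; intro i hi; simp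
      · -- fn does not occur in M : both sides collapse to d
        simp only [hφA, hφ, eqAtom, Atom.subst, List.map_cons, List.map_nil, subst_app]
        rw [collapse_app_not (by rw [hlen1]; exact hfm),
          collapse_app_not (by rw [hlen2]; exact hfm)]
        exact Irefl d hdg
    · -- predicate compatibility
      obtain ⟨p, n⟩ := pn
      intro hb
      have hbx := hb ⟨p, xsList n⟩ (by simp)
      have hbe : ∀ i < n, eqAtom eqP (φ (g (2*i))) (φ (g (2*i+1))) ∈ I := by
        intro i hi
        apply hEq_of
        have := hb (eqAtom eqP (.var (2*i)) (.var (2*i+1)))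
          (by
            simp only [List.mem_cons, eqConjList, List.mem_map, List.mem_range]
            exact Or.inr ⟨i, hi, rfl⟩)
        simpa [eqAtom, Atom.subst] using this
      have hxfun : ∀ fn ∈ (Atom.mk p (xsList (F := F) n)).funcs, fn ∈ S := by
        intro fn hfn
        simp [Atom.funcs, xsList] at hfn
      have hyfun : ∀ fn ∈ (Atom.mk p (ysList (F := F) n)).funcs, fn ∈ S := by
        intro fn hfn
        simp [Atom.funcs, ysList] at hfn
      by_cases hp_sub : p = subP
      · exact ⟨_, List.mem_singleton.2 rfl, atom_isGround_subst hg _, Or.inr (Or.inl hp_sub)⟩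
      by_cases hp_neq : p = neqP
      · rcases hbx with ⟨-, (⟨-, h, -⟩ | h | ⟨-, s, t, hargs, hne⟩)⟩
        · exact absurd hp_neq h
        · exact absurd h hp_sub
        · -- args force n = 2
          have hlen : n = 2 := by
            have := congrArg List.length hargs
            simpa [Atom.subst, xsList] using this
          subst hlen
          simp only [Atom.subst, xsList, List.range_succ, List.map_cons, List.map_nil,
            List.map_append, subst_var] at hargs
          have hs : s = g 0 := by
            simp [show List.range 2 = [0, 1] from rfl] at hargs
            tauto
          have ht : t = g 2 := by
            simp [show List.range 2 = [0, 1] from rfl] at hargs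
            tauto
          subst hs; subst ht
          have he1 := hbe 0 (by norm_num)
          have he2 := hbe 1 (by norm_num)
          norm_num at he1 he2
          refine ⟨_, List.mem_singleton.2 rfl, atom_isGround_subst hg _,
            Or.inr (Or.inr ⟨hp_neq, g 1, g 3, ?_, ?_⟩)⟩
          · simp [Atom.subst, ysList, show List.range 2 = [0, 1] from rfl]
          · intro hc
            apply hne
            have g0 : (φ (g 0)).IsGround := collapse_ground hdg _ (hg 0)
            have g1 : (φ (g 1)).IsGround := collapse_ground hdg _ (hg 1)
            have g2 : (φ (g 2)).IsGround := collapse_ground hdg _ (hg 2)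
            have g3 : (φ (g 3)).IsGround := collapse_ground hdg _ (hg 3)
            exact Itrans _ _ _ g0 g1 g2 he1
              (Itrans _ _ _ g1 g3 g2 hc (Isym _ _ g2 g3 he2))
      by_cases hp_eq : (p, n) = (eqP, 2)
      · have hpeq1 : p = eqP := congrArg Prod.fst hp_eq
        have hpeq2 : n = 2 := congrArg Prod.snd hp_eq
        subst hpeq2
        have hx : eqAtom eqP (φ (g 0)) (φ (g 2)) ∈ I := by
          apply hEq_of
          have heqx : (Atom.mk p (xsList (F := F) 2)).subst g =
              ⟨eqP, [g 0, g 2]⟩ := by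
            simp [Atom.subst, xsList, hpeq1, show List.range 2 = [0, 1] from rfl]
          rwa [heqx] at hbx
        have he1 := hbe 0 (by norm_num)
        have he2 := hbe 1 (by norm_num)
        norm_num at he1 he2
        refine ⟨_, List.mem_singleton.2 rfl, atom_isGround_subst hg _,
          Or.inl ⟨by rw [hpeq1]; exact eqP_ne_sub, by rw [hpeq1]; exact eqP_ne_neq, ?_⟩⟩
        have g0 : (φ (g 0)).IsGround := collapse_ground hdg _ (hg 0)
        have g1 : (φ (g 1)).IsGround := collapse_ground hdg _ (hg 1)
        have g2 : (φ (g 2)).IsGround := collapse_ground hdg _ (hg 2)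
        have g3 : (φ (g 3)).IsGround := collapse_ground hdg _ (hg 3)
        have : eqAtom eqP (φ (g 1)) (φ (g 3)) ∈ I :=
          Itrans _ _ _ g1 g0 g3 (Isym _ _ g0 g1 he1) (Itrans _ _ _ g0 g2 g3 hx he2)
        have hysubst : (Atom.mk p (ysList (F := F) 2)).subst g =
            ⟨eqP, [g 1, g 3]⟩ := by
          simp [Atom.subst, ysList, hpeq1, show List.range 2 = [0, 1] from rfl]
        rw [hysubst]
        simpa [hφA, eqAtom] using this
      · -- generic case: pn ∈ predsOf M
        have hpnM : (p, n) ∈ predsOf M := by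
          rcases hchar (p, n) hpn with h | h | h | h | h
          · exact h
          · exact absurd (congrArg Prod.fst h) hp_sub
          · exact absurd (congrArg Prod.fst h) hp_neq
          · exact absurd h hp_eq
          · rw [h]; exact hdomM
        have hmem : (⟨[⟨p, ysList n⟩], ⟨p, xsList n⟩ :: eqConjList eqP n⟩ :
            Clause P F) ∈ M ∪ EAX eqP (predsOf M) (funcsOf M) :=
          Or.inr (Or.inr ⟨(p, n), hpnM, rfl⟩)
        have hxI : (Atom.mk p (xsList (F := F) n)).subst (fun n => φ (g n)) ∈ I := by
          rw [← hAtrans g _ hxfun]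
          rcases hbx with ⟨-, (⟨-, -, h⟩ | h | ⟨h, -⟩)⟩
          · exact h
          · exact absurd h hp_sub
          · exact absurd h hp_neq
        have := hI _ hmem (fun n => φ (g n)) (hφg hg) (by
          intro a ha
          rcases List.mem_cons.1 ha with rfl | ha
          · exact hxI
          · simp only [eqConjList, List.mem_map, List.mem_range] at ha
            obtain ⟨i, hi, rfl⟩ := ha
            simpa [eqAtom, Atom.subst] using hbe i hi)
        simp only [List.mem_singleton, exists_eq_left] at this
        refine ⟨_, List.mem_singleton.2 rfl, atom_isGround_subst hg _,
          Or.inl ⟨hp_sub, hp_neq, ?_⟩⟩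
        rw [hAtrans g _ hyfun]
        exact this

end BUMG
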